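/- The relational system (nwd(Q), ⊥*, seq(Q)) of nowhere dense sets of rationals versus divergent sequences is Galois-Tukey equivalent to the system D(Q) = (nwd(Q), ⊥*, Dense(Q)) of nowhere dense sets versus dense sets, where ⊥* means finite intersection (respectively, only finitely many terms of the sequence lie in the nowhere dense set). -/

import Mathlib

/-- A relational system `⟨A₋, A, A₊⟩`. -/
structure RelSys : Type 1 where
  Dom : Type
  Cod : Type
  Rel : Dom → Cod → Prop

/-- The dominating number `𝔡(A)` of a relational system. -/
noncomputable def dNum (S : RelSys) : Cardinal :=
  sInf { c | ∃ Y : Set S.Cod, Cardinal.mk Y = c ∧ ∀ x : S.Dom, ∃ y ∈ Y, S.Rel x y }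

/-- The bounding number `𝔟(A)` of a relational system. -/
noncomputable def bNum (S : RelSys) : Cardinal :=
  sInf { c | ∃ X : Set S.Dom, Cardinal.mk X = c ∧ ∀ y : S.Cod, ∃ x ∈ X, ¬ S.Rel x y }

/-- A generalized Galois–Tukey connection from `S` to `T` (`S ≤_T T`). -/
def GT (S T : RelSys) : Prop :=
  ∃ (φm : S.Dom → T.Dom) (φp : T.Cod → S.Cod),
    ∀ a b, T.Rel (φm a) b → S.Rel a (φp b)

/-- Galois–Tukey equivalence. -/
def GTequiv (S T : RelSys) : Prop := GT S T ∧ GT T S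

/-- The σ-version `A^σ` of a relational system. -/
def sigmaSys (S : RelSys) : RelSys :=
  ⟨S.Dom, ℕ → S.Cod, fun a f => ∃ n, S.Rel a (f n)⟩

/-- Sequential composition `A;B` of relational systems. -/
def seqComp (S T : RelSys) : RelSys :=
  ⟨S.Dom × (S.Cod → T.Dom), S.Cod × T.Cod,
   fun p q => S.Rel p.1 q.1 ∧ T.Rel (p.2 q.1) q.2⟩

/-- An antichain in a Boolean algebra: pairwise disjoint nonzero elements. -/
def BAAntichain {α : Type} [BooleanAlgebra α] (A : Set α) : Prop :=
  (∀ a ∈ A, a ≠ ⊥) ∧ ∀ a ∈ A, ∀ b ∈ A, a ≠ b → a ⊓ b = ⊥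

/-- A maximal antichain in a Boolean algebra. -/
def MaxAC {α : Type} [BooleanAlgebra α] (A : Set α) : Prop :=
  BAAntichain A ∧ ∀ b : α, b ≠ ⊥ → ∃ a ∈ A, a ⊓ b ≠ ⊥

/-- The countable chain condition. -/
def CCC (α : Type) [BooleanAlgebra α] : Prop :=
  ∀ A : Set α, BAAntichain A → A.Countable

/-- `C` refines `A` (written `A ≤ C`): every element of `C` is below some element of `A`. -/
def Refines {α : Type} [BooleanAlgebra α] (A C : Set α) : Prop :=
  ∀ c ∈ C, ∃ a ∈ A, c ≤ a

/-- `C` almost refines `A` (written `A ≤* C`). -/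
def AlmostRefines {α : Type} [BooleanAlgebra α] (A C : Set α) : Prop :=
  ∃ F : Finset α, ↑F ⊆ A ∧ Refines ((A \ ↑F) ∪ {F.sup id}) C

/-- The set of maximal antichains of `α`. -/
def PartT (α : Type) [BooleanAlgebra α] : Type := {A : Set α // MaxAC A}

/-- The refinement relational system `Part(α)`. -/
def PartSys (α : Type) [BooleanAlgebra α] : RelSys :=
  ⟨PartT α, PartT α, fun A C => Refines A.1 C.1⟩

/-- The almost-refinement relational system `Part*(α)`. -/
def PartStar (α : Type) [BooleanAlgebra α] : RelSys :=
  ⟨PartT α, PartT α, fun A C => AlmostRefines A.1 C.1⟩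

/-- The eventual domination relational system `(ωω, ≤*, ωω)`. -/
def domSys : RelSys :=
  ⟨ℕ → ℕ, ℕ → ℕ, fun f g => ∀ᶠ n in Filter.atTop, f n ≤ g n⟩

/-- The dense linear order on the binary tree `2^{<ω}` (the rationals):
`s < t` iff `t ⊂ s` and `s(|t|) = 0`, or `s ⊂ t` and `t(|s|) = 1`, or `s, t` are
incomparable and `s(k) < t(k)` at their first point of difference `k`. -/
def ltQ (s t : List Bool) : Prop :=
  (t <+: s ∧ s[t.length]? = some false) ∨
  (s <+: t ∧ t[s.length]? = some true) ∨
  (¬ s <+: t ∧ ¬ t <+: s ∧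
    ∃ k : ℕ, (∀ i < k, s[i]? = t[i]?) ∧ s[k]? = some false ∧ t[k]? = some true)

/-- A dense set of rationals: every node has an extension in `D`. -/
def DenseQ (D : Set (List Bool)) : Prop := ∀ s : List Bool, ∃ t ∈ D, s <+: t

/-- A maximal antichain in the tree `2^{<ω}`. -/
def TreeMaxAC (A : Set (List Bool)) : Prop :=
  (∀ a ∈ A, ∀ b ∈ A, a ≠ b → ¬ a <+: b ∧ ¬ b <+: a) ∧
    ∀ s : List Bool, ∃ a ∈ A, a <+: s ∨ s <+: a

/-- A nowhere dense set of rationals: all its elements extend into a single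
maximal antichain. -/
def NwdQ (N : Set (List Bool)) : Prop :=
  ∃ A : Set (List Bool), TreeMaxAC A ∧ ∀ s ∈ N, ∃ t ∈ A, s <+: t

/-- A divergent sequence of rationals: eventually `<`-below every node. -/
def divergentQ (x : ℕ → List Bool) : Prop :=
  ∀ s : List Bool, ∀ᶠ i in Filter.atTop, ltQ (x i) s

/-- The system `D(Q) = (nwd(Q), ⊥*, Dense(Q))`. -/
def DsysDense : RelSys :=
  ⟨{N : Set (List Bool) // NwdQ N}, {D : Set (List Bool) // DenseQ D},
   fun N D => (N.1 ∩ D.1).Finite⟩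

/-- The system `(nwd(Q), ⊥*, seq(Q))` of nowhere dense sets versus divergent sequences. -/
def DsysSeq : RelSys :=
  ⟨{N : Set (List Bool) // NwdQ N}, {x : ℕ → List Bool // divergentQ x},
   fun N x => {i | x.1 i ∈ N.1}.Finite⟩

section Stmt17Helpers

open List

lemma st17_repl_prefix_repl {m n : ℕ} (h : m ≤ n) :
    List.replicate m false <+: List.replicate n false := by
  refine ⟨List.replicate (n - m) false, ?_⟩
  rw [← List.replicate_add, Nat.add_sub_cancel' h]

lemma st17_prefix_get? {l1 l2 : List Bool} (h : l1 <+: l2) {i : ℕ} (hi : i < l1.length) :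
    l2[i]? = l1[i]? := by
  obtain ⟨r, rfl⟩ := h
  exact List.getElem?_append_left hi

lemma st17_get?_repl {n m : ℕ} (h : m < n) :
    (List.replicate n false)[m]? = some false := by
  simp [h]

lemma st17_split_run (s : List Bool) :
    s = List.replicate s.length false ∨
    ∃ k t, s = List.replicate k false ++ true :: t := by
  induction s with
  | nil => left; rfl
  | cons b s ih =>
    cases b
    · rcases ih with h | ⟨k, t, h⟩
      · left
        rw [List.length_cons, List.replicate_succ]
        exact congrArg (false :: ·) h
      · right
        exact ⟨k + 1, t, by rw [List.replicate_succ, h]; rfl⟩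
    · right; exact ⟨0, s, rfl⟩

lemma st17_nwd_mono {N N' : Set (List Bool)} (hsub : N' ⊆ N) (hN : NwdQ N) : NwdQ N' := by
  obtain ⟨A, hA, hcov⟩ := hN
  exact ⟨A, hA, fun s hs => hcov s (hsub hs)⟩

lemma st17_nwd_empty : NwdQ (∅ : Set (List Bool)) := by
  refine ⟨{[]}, ⟨?_, ?_⟩, ?_⟩
  · rintro a rfl b rfl hne; exact absurd rfl hne
  · intro s; exact ⟨[], rfl, Or.inl (List.nil_prefix)⟩
  · rintro s ⟨⟩

end Stmt17Helpers
section Stmt17Union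

def st17_unionAC (A A' : Set (List Bool)) : Set (List Bool) :=
  {t | (t ∈ A ∨ t ∈ A') ∧ (∃ a ∈ A, a <+: t) ∧ (∃ a ∈ A', a <+: t)}

lemma st17_unionAC_extL {A A' : Set (List Bool)} (hA' : TreeMaxAC A')
    {a : List Bool} (ha : a ∈ A) : ∃ c ∈ st17_unionAC A A', a <+: c := by
  obtain ⟨a', ha', h⟩ := hA'.2 a
  rcases h with h | h
  · exact ⟨a, ⟨Or.inl ha, ⟨a, ha, List.prefix_refl a⟩, ⟨a', ha', h⟩⟩, List.prefix_refl a⟩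
  · exact ⟨a', ⟨Or.inr ha', ⟨a, ha, h⟩, ⟨a', ha', List.prefix_refl a'⟩⟩, h⟩

lemma st17_unionAC_extR {A A' : Set (List Bool)} (hA : TreeMaxAC A)
    {a' : List Bool} (ha' : a' ∈ A') : ∃ c ∈ st17_unionAC A A', a' <+: c := by
  obtain ⟨a, ha, h⟩ := hA.2 a'
  rcases h with h | h
  · exact ⟨a', ⟨Or.inr ha', ⟨a, ha, h⟩, ⟨a', ha', List.prefix_refl a'⟩⟩, List.prefix_refl a'⟩
  · exact ⟨a, ⟨Or.inl ha, ⟨a, ha, List.prefix_refl a⟩, ⟨a', ha', h⟩⟩, h⟩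

lemma st17_unionAC_notPrefix {A A' : Set (List Bool)} (hA : TreeMaxAC A) (hA' : TreeMaxAC A') :
    ∀ c ∈ st17_unionAC A A', ∀ c' ∈ st17_unionAC A A', c ≠ c' → ¬ c <+: c' := by
  rintro c ⟨_, ⟨a, haA, hac⟩, ⟨a', haA', hac'⟩⟩ c' ⟨hc' , ⟨b, hbA, hbc⟩, ⟨b', hbA', hbc'⟩⟩ hne hp
  rcases hc' with hc' | hc'
  · have hatc' : a <+: c' := hac.trans hp
    by_cases hae : a = c'
    · subst hae
      have : c <+: a := hp
      exact hne (hac.eq_of_length (hac.length_le.antisymm this.length_le)).symm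
    · exact (hA.1 a haA c' hc' hae).1 hatc'
  · have hatc' : a' <+: c' := hac'.trans hp
    by_cases hae : a' = c'
    · subst hae
      exact hne (hac'.eq_of_length (hac'.length_le.antisymm hp.length_le)).symm
    · exact (hA'.1 a' haA' c' hc' hae).1 hatc'

lemma st17_unionAC_max {A A' : Set (List Bool)} (hA : TreeMaxAC A) (hA' : TreeMaxAC A') :
    TreeMaxAC (st17_unionAC A A') := by
  constructor
  · intro c hc c' hc' hne
    exact ⟨st17_unionAC_notPrefix hA hA' c hc c' hc' hne,
           st17_unionAC_notPrefix hA hA' c' hc' c hc hne.symm⟩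
  · intro s
    obtain ⟨a, ha, hcomp⟩ := hA.2 s
    rcases hcomp with h | h
    · obtain ⟨a', ha', hcomp'⟩ := hA'.2 s
      rcases hcomp' with h' | h'
      · -- a <+: s, a' <+: s
        rcases List.prefix_or_prefix_of_prefix h h' with hc | hc
        · exact ⟨a', ⟨Or.inr ha', ⟨a, ha, hc⟩, ⟨a', ha', List.prefix_refl a'⟩⟩, Or.inl h'⟩
        · exact ⟨a, ⟨Or.inl ha, ⟨a, ha, List.prefix_refl a⟩, ⟨a', ha', hc⟩⟩, Or.inl h⟩
      · -- a <+: s, s <+: a'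
        exact ⟨a', ⟨Or.inr ha', ⟨a, ha, h.trans h'⟩, ⟨a', ha', List.prefix_refl a'⟩⟩, Or.inr h'⟩
    · obtain ⟨c, hc, hac⟩ := st17_unionAC_extL (A := A) hA' ha
      exact ⟨c, hc, Or.inr (h.trans hac)⟩

lemma st17_nwd_union {N N' : Set (List Bool)} (hN : NwdQ N) (hN' : NwdQ N') :
    NwdQ (N ∪ N') := by
  obtain ⟨A, hA, hcov⟩ := hN
  obtain ⟨A', hA', hcov'⟩ := hN'
  refine ⟨st17_unionAC A A', st17_unionAC_max hA hA', ?_⟩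
  rintro s (hs | hs)
  · obtain ⟨t, htA, hst⟩ := hcov s hs
    obtain ⟨c, hc, htc⟩ := st17_unionAC_extL (A := A) hA' htA
    exact ⟨c, hc, hst.trans htc⟩
  · obtain ⟨t, htA, hst⟩ := hcov' s hs
    obtain ⟨c, hc, htc⟩ := st17_unionAC_extR (A' := A') hA htA
    exact ⟨c, hc, hst.trans htc⟩

end Stmt17Union
section Stmt17Pullback

lemma st17_nwd_pullback (w : List Bool) {N : Set (List Bool)} (hN : NwdQ N) :
    NwdQ {v | w ++ v ∈ N} := by
  obtain ⟨A, ⟨hac, hmax⟩, hcov⟩ := hN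
  by_cases hw : ∃ a ∈ A, a <+: w ∧ a ≠ w
  · obtain ⟨a, haA, haw, hane⟩ := hw
    refine st17_nwd_mono ?_ st17_nwd_empty
    intro v hv
    exfalso
    obtain ⟨t, htA, hvt⟩ := hcov _ hv
    have hwt : w <+: t := (List.prefix_append w v).trans hvt
    have hat : a <+: t := haw.trans hwt
    by_cases he : a = t
    · subst he
      exact hane (haw.eq_of_length (haw.length_le.antisymm hwt.length_le))
    · exact (hac a haA t htA he).1 hat
  · push_neg at hw
    refine ⟨{u | w ++ u ∈ A}, ⟨?_, ?_⟩, ?_⟩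
    · intro u hu u' hu' hne
      have hne' : w ++ u ≠ w ++ u' := fun h => hne (List.append_cancel_left h)
      have h2 := hac _ hu _ hu' hne'
      exact ⟨fun hp => h2.1 ((List.prefix_append_right_inj w).mpr hp),
             fun hp => h2.2 ((List.prefix_append_right_inj w).mpr hp)⟩
    · intro u
      obtain ⟨a, haA, h⟩ := hmax (w ++ u)
      rcases h with h | h
      · rcases List.prefix_or_prefix_of_prefix h (List.prefix_append w u) with h1 | h1
        · have he : a = w := hw a haA h1
          subst he
          exact ⟨[], by simpa using haA, Or.inl List.nil_prefix⟩
        · obtain ⟨r, rfl⟩ := h1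
          exact ⟨r, haA, Or.inl ((List.prefix_append_right_inj w).mp h)⟩
      · have h1 : w <+: a := (List.prefix_append w u).trans h
        obtain ⟨r, rfl⟩ := h1
        exact ⟨r, haA, Or.inr ((List.prefix_append_right_inj w).mp h)⟩
    · intro v hv
      obtain ⟨t, htA, hvt⟩ := hcov _ hv
      have h1 : w <+: t := (List.prefix_append w v).trans hvt
      obtain ⟨r, rfl⟩ := h1
      exact ⟨r, htA, (List.prefix_append_right_inj w).mp hvt⟩

end Stmt17Pullback
section Stmt17Cone

lemma st17_get_true (m : ℕ) (d : List Bool) :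
    (List.replicate m false ++ true :: d)[m]? = some true := by
  rw [List.getElem?_append_right (by simp)]
  simp

lemma st17_get_false {m m' : ℕ} (d : List Bool) (h : m < m') :
    (List.replicate m' false ++ true :: d)[m]? = some false := by
  rw [List.getElem?_append_left (by simpa using h)]
  exact st17_get?_repl h

lemma st17_len_lt (m : ℕ) (d : List Bool) :
    m < (List.replicate m false ++ true :: d).length := by
  simp

lemma st17_key {m m' : ℕ} {d d' : List Bool}
    (hp : List.replicate m false ++ true :: d <+: List.replicate m' false ++ true :: d') :
    m = m' ∧ d <+: d' := by
  have hm : m = m' := by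
    by_contra hne
    rcases Nat.lt_or_ge m m' with h | h
    · have := st17_prefix_get? hp (i := m) (st17_len_lt m d)
      rw [st17_get_true, st17_get_false d' h] at this
      exact absurd this (by simp)
    · have hlt : m' < m := lt_of_le_of_ne h (fun e => hne e.symm)
      have := st17_prefix_get? hp (i := m') (lt_trans hlt (st17_len_lt m d))
      rw [st17_get_false d hlt, st17_get_true] at this
      exact absurd this (by simp)
  subst hm
  have h2 := (List.prefix_append_right_inj (List.replicate m false)).mp hp
  exact ⟨rfl, (List.cons_prefix_cons.mp h2).2⟩

lemma st17_nwd_iUnion_cone (M : ℕ → Set (List Bool)) (hn : ∀ n, NwdQ (M n))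
    (hc : ∀ n, ∀ v ∈ M n, List.replicate n false <+: v) :
    NwdQ (⋃ n, M n) := by
  classical
  -- finite unions
  have hF : ∀ m : ℕ, NwdQ {v | ∃ n ≤ m, v ∈ M n} := by
    intro m
    induction m with
    | zero =>
      refine st17_nwd_mono ?_ (hn 0)
      rintro v ⟨n, hn0, hv⟩
      rwa [Nat.le_zero.mp hn0] at hv
    | succ m ih =>
      have he : {v | ∃ n ≤ m + 1, v ∈ M n} = {v | ∃ n ≤ m, v ∈ M n} ∪ M (m + 1) := by
        ext v
        constructor
        · rintro ⟨n, hnm, hv⟩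
          rcases Nat.lt_or_ge n (m + 1) with h | h
          · exact Or.inl ⟨n, Nat.lt_succ_iff.mp h, hv⟩
          · have : n = m + 1 := le_antisymm hnm h
            subst this; exact Or.inr hv
        · rintro (⟨n, hnm, hv⟩ | hv)
          · exact ⟨n, hnm.trans (Nat.le_succ m), hv⟩
          · exact ⟨m + 1, le_refl _, hv⟩
      rw [he]
      exact st17_nwd_union ih (hn (m + 1))
  have hG : ∀ m : ℕ, ∃ A, TreeMaxAC A ∧
      ∀ v ∈ {v | (List.replicate m false ++ [true]) ++ v ∈ {v | ∃ n ≤ m, v ∈ M n}}, ∃ t ∈ A, v <+: t :=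
    fun m => st17_nwd_pullback _ (hF m)
  choose D hDmax hDcov using hG
  -- the combined antichain
  refine ⟨⋃ m, (fun d => List.replicate m false ++ true :: d) '' D m, ⟨?_, ?_⟩, ?_⟩
  · -- antichain
    have key : ∀ c ∈ (⋃ m, (fun d => List.replicate m false ++ true :: d) '' D m),
        ∀ c' ∈ (⋃ m, (fun d => List.replicate m false ++ true :: d) '' D m), c ≠ c' → ¬ c <+: c' := by
      rintro c hc c' hc' hne hp
      simp only [Set.mem_iUnion, Set.mem_image] at hc hc'
      obtain ⟨m, d, hd, rfl⟩ := hc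
      obtain ⟨m', d', hd', rfl⟩ := hc'
      obtain ⟨hm, hdd⟩ := st17_key hp
      subst hm
      by_cases he : d = d'
      · exact hne (by rw [he])
      · exact ((hDmax m).1 d hd d' hd' he).1 hdd
    intro c hc c' hc' hne
    exact ⟨key c hc c' hc' hne, key c' hc' c hc hne.symm⟩
  · -- maximality
    intro s
    rcases st17_split_run s with hs | ⟨k, t, hs⟩
    · obtain ⟨d, hd, -⟩ := (hDmax s.length).2 []
      refine ⟨List.replicate s.length false ++ true :: d, ?_, Or.inr ?_⟩
      · exact Set.mem_iUnion.mpr ⟨s.length, Set.mem_image_of_mem _ hd⟩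
      · conv_lhs => rw [hs]
        exact ⟨true :: d, rfl⟩
    · obtain ⟨d, hd, hcomp⟩ := (hDmax k).2 t
      refine ⟨List.replicate k false ++ true :: d, ?_, ?_⟩
      · exact Set.mem_iUnion.mpr ⟨k, Set.mem_image_of_mem _ hd⟩
      · rw [hs]
        rcases hcomp with h | h
        · exact Or.inl ((List.prefix_append_right_inj _).mpr (List.cons_prefix_cons.mpr ⟨rfl, h⟩))
        · exact Or.inr ((List.prefix_append_right_inj _).mpr (List.cons_prefix_cons.mpr ⟨rfl, h⟩))
  · -- coverage
    rintro v hv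
    obtain ⟨_, ⟨n, rfl⟩, hvn⟩ := hv
    rcases st17_split_run v with hs | ⟨k, v₂, hs⟩
    · obtain ⟨d, hd, -⟩ := (hDmax v.length).2 []
      refine ⟨List.replicate v.length false ++ true :: d, ?_, ?_⟩
      · exact Set.mem_iUnion.mpr ⟨v.length, Set.mem_image_of_mem _ hd⟩
      · conv_lhs => rw [hs]
        exact ⟨true :: d, rfl⟩
    · have hkn : n ≤ k := by
        by_contra hlt
        push_neg at hlt
        have hpre := hc n v hvn
        have h1 : v[k]? = some false := by
          rw [st17_prefix_get? hpre (by simpa using hlt)]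
          exact st17_get?_repl hlt
        rw [hs, st17_get_true] at h1
        exact absurd h1 (by simp)
      have hvF : (List.replicate k false ++ [true]) ++ v₂ ∈ {v | ∃ n' ≤ k, v ∈ M n'} := by
        have : (List.replicate k false ++ [true]) ++ v₂ = v := by
          rw [hs, List.append_assoc]; rfl
        rw [this]
        exact ⟨n, hkn, hvn⟩
      obtain ⟨d, hd, hv₂d⟩ := hDcov k v₂ hvF
      refine ⟨List.replicate k false ++ true :: d, ?_, ?_⟩
      · exact Set.mem_iUnion.mpr ⟨k, Set.mem_image_of_mem _ hd⟩
      · rw [hs]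
        exact (List.prefix_append_right_inj _).mpr (List.cons_prefix_cons.mpr ⟨rfl, hv₂d⟩)

end Stmt17Cone
section Stmt17Phi

lemma st17_nwd_phi {N : Set (List Bool)} (hN : NwdQ N) :
    NwdQ {v | ∃ s : List Bool,
      List.replicate (Encodable.encode s) false <+: v ∧ s ++ true :: v ∈ N} := by
  classical
  have he : {v | ∃ s : List Bool,
      List.replicate (Encodable.encode s) false <+: v ∧ s ++ true :: v ∈ N} =
      ⋃ n, {v | List.replicate n false <+: v ∧
        ∃ s : List Bool, Encodable.encode s = n ∧ s ++ true :: v ∈ N} := by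
    ext v
    simp only [Set.mem_iUnion, Set.mem_setOf_eq]
    constructor
    · rintro ⟨s, h1, h2⟩; exact ⟨Encodable.encode s, h1, s, rfl, h2⟩
    · rintro ⟨n, h1, s, rfl, h2⟩; exact ⟨s, h1, h2⟩
  rw [he]
  refine st17_nwd_iUnion_cone _ ?_ ?_
  · intro n
    by_cases hn : ∃ s : List Bool, Encodable.encode s = n
    · obtain ⟨s, rfl⟩ := hn
      refine st17_nwd_mono ?_ (st17_nwd_pullback (s ++ [true]) hN)
      rintro v ⟨-, s', hs', hmem⟩
      have : s' = s := Encodable.encode_injective hs'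
      subst this
      show (s' ++ [true]) ++ v ∈ N
      rwa [List.append_assoc]
    · refine st17_nwd_mono ?_ st17_nwd_empty
      rintro v ⟨-, s, hs, -⟩
      exact absurd ⟨s, hs⟩ hn
  · rintro n v ⟨h1, -⟩
    exact h1

lemma st17_ltQ_of_prefix {t s : List Bool}
    (h : List.replicate (s.length + 1) false <+: t) : ltQ t s := by
  rcases st17_split_run s with hs | ⟨k, s₂, hs⟩
  · left
    constructor
    · conv_lhs => rw [hs]
      exact (st17_repl_prefix_repl (Nat.le_succ _)).trans h
    · rw [st17_prefix_get? h (by simp), st17_get?_repl (Nat.lt_succ_self _)]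
  · have hk : k < s.length := by rw [hs]; simp
    have hlen : s.length + 1 ≤ t.length := by
      have := h.length_le; simpa using this
    have hts : ∀ i, i < s.length + 1 → t[i]? = some false := by
      intro i hi
      rw [st17_prefix_get? h (by simpa using hi), st17_get?_repl hi]
    have hsk : s[k]? = some true := by rw [hs]; exact st17_get_true k s₂
    right; right
    refine ⟨?_, ?_, k, ?_, ?_, ?_⟩
    · intro hp
      have := hp.length_le
      omega
    · intro hp
      have := st17_prefix_get? hp (i := k) hk
      rw [hts k (lt_trans hk (Nat.lt_succ_self _)), hsk] at this
      exact absurd this (by simp)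
    · intro i hik
      rw [hts i (by omega), hs, st17_get_false s₂ hik]
    · exact hts k (by omega)
    · exact hsk

lemma st17_prefix_of_ltQ {v : List Bool} {n : ℕ}
    (h : ltQ v (List.replicate n false)) : List.replicate n false <+: v := by
  rcases h with ⟨hp, -⟩ | ⟨-, hg⟩ | ⟨-, -, k, -, -, hg⟩
  · exact hp
  · exfalso
    rcases Nat.lt_or_ge v.length n with h' | h'
    · rw [st17_get?_repl h'] at hg; exact absurd hg (by simp)
    · rw [List.getElem?_eq_none_iff.mpr (by simpa using h')] at hg; exact absurd hg (by simp)
  · exfalso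
    rcases Nat.lt_or_ge k n with h' | h'
    · rw [st17_get?_repl h'] at hg; exact absurd hg (by simp)
    · rw [List.getElem?_eq_none_iff.mpr (by simpa using h')] at hg; exact absurd hg (by simp)

end Stmt17Phi
section Stmt17Final

lemma st17_exists_j {x : ℕ → List Bool} (hx : divergentQ x) :
    ∃ j : ℕ → ℕ, StrictMono j ∧ ∀ n, List.replicate n false <+: x (j n) := by
  have h : ∀ n : ℕ, ∃ a, ∀ i ≥ a, List.replicate n false <+: x i := by
    intro n
    obtain ⟨a, ha⟩ := Filter.eventually_atTop.mp (hx (List.replicate n false))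
    exact ⟨a, fun i hi => st17_prefix_of_ltQ (ha i hi)⟩
  choose B hB using h
  refine ⟨fun n => Nat.rec (B 0) (fun n ih => max (B (n + 1)) (ih + 1)) n, ?_, ?_⟩
  · apply strictMono_nat_of_lt_succ
    intro n
    exact lt_of_lt_of_le (Nat.lt_succ_self _) (le_max_right _ _)
  · intro n
    cases n with
    | zero => exact hB 0 _ (le_refl _)
    | succ n => exact hB (n + 1) _ (le_max_left _ _)

lemma st17_exists_seq {D : Set (List Bool)} (hD : DenseQ D) :
    ∃ y : ℕ → List Bool, (∀ n, y n ∈ D) ∧ Function.Injective y ∧ divergentQ y := by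
  classical
  have h : ∀ m : ℕ, ∃ t, t ∈ D ∧ List.replicate m false <+: t := by
    intro m
    obtain ⟨t, ht, hp⟩ := hD (List.replicate m false)
    exact ⟨t, ht, hp⟩
  choose p hpD hpP using h
  set c : ℕ → ℕ := fun n => Nat.rec 1 (fun _ ih => (p ih).length + 1) n with hc
  have hclen : ∀ n, c n ≤ (p (c n)).length := by
    intro n
    have := (hpP (c n)).length_le
    simpa using this
  have hcsucc : ∀ n, c (n + 1) = (p (c n)).length + 1 := fun n => rfl
  have hcmono : ∀ n, c n < c (n + 1) := by
    intro n
    rw [hcsucc]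
    exact Nat.lt_succ_of_le (hclen n)
  have hlenmono : StrictMono (fun n => (p (c n)).length) := by
    apply strictMono_nat_of_lt_succ
    intro n
    calc (p (c n)).length < c (n + 1) := by rw [hcsucc]; omega
    _ ≤ (p (c (n + 1))).length := hclen (n + 1)
  have hcge : ∀ n, n + 1 ≤ c n := by
    intro n
    induction n with
    | zero => exact le_refl 1
    | succ n ih => have := hcmono n; omega
  refine ⟨fun n => p (c n), fun n => hpD (c n), ?_, ?_⟩
  · intro a b hab
    exact hlenmono.injective (congrArg List.length hab)
  · intro s
    refine Filter.eventually_atTop.mpr ⟨s.length + 1, fun i hi => ?_⟩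
    apply st17_ltQ_of_prefix
    refine (st17_repl_prefix_repl ?_).trans (hpP (c i))
    have := hcge i
    omega

theorem st17_main : GTequiv DsysSeq DsysDense := by
  classical
  constructor
  · -- GT DsysSeq DsysDense
    choose yf hy1 hy2 hy3 using
      fun (D : {D : Set (List Bool) // DenseQ D}) => st17_exists_seq D.2
    refine ⟨fun N => N, fun D => ⟨yf D, hy3 D⟩, ?_⟩
    intro N D h
    have hsub : {i | yf D i ∈ N.1} ⊆ yf D ⁻¹' (N.1 ∩ D.1) :=
      fun i hi => ⟨hi, hy1 D i⟩
    exact ((h.preimage (hy2 D).injOn).subset hsub)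
  · -- GT DsysDense DsysSeq
    choose jf hj1 hj2 using
      fun (x : {x : ℕ → List Bool // divergentQ x}) => st17_exists_j x.2
    refine ⟨fun N => ⟨{v | ∃ s : List Bool,
        List.replicate (Encodable.encode s) false <+: v ∧ s ++ true :: v ∈ N.1},
        st17_nwd_phi N.2⟩,
      fun x => ⟨Set.range (fun s : List Bool =>
        s ++ true :: x.1 (jf x (Encodable.encode s))), ?_⟩, ?_⟩
    · intro s
      exact ⟨s ++ true :: x.1 (jf x (Encodable.encode s)), Set.mem_range_self s,
        ⟨true :: x.1 (jf x (Encodable.encode s)), rfl⟩⟩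
    · intro N x h
      have hinj : Function.Injective
          (fun s : List Bool => jf x (Encodable.encode s)) :=
        (hj1 x).injective.comp Encodable.encode_injective
      have hsub : {s : List Bool |
          s ++ true :: x.1 (jf x (Encodable.encode s)) ∈ N.1} ⊆
          (fun s : List Bool => jf x (Encodable.encode s)) ⁻¹'
            {i | x.1 i ∈ {v | ∃ s : List Bool,
              List.replicate (Encodable.encode s) false <+: v ∧ s ++ true :: v ∈ N.1}} := by
        intro s hs
        exact ⟨s, hj2 x (Encodable.encode s), hs⟩
      have hfin : {s : List Bool |
          s ++ true :: x.1 (jf x (Encodable.encode s)) ∈ N.1}.Finite :=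
        (h.preimage hinj.injOn).subset hsub
      have hsub2 : N.1 ∩ Set.range (fun s : List Bool =>
          s ++ true :: x.1 (jf x (Encodable.encode s))) ⊆
          (fun s : List Bool => s ++ true :: x.1 (jf x (Encodable.encode s))) ''
            {s : List Bool | s ++ true :: x.1 (jf x (Encodable.encode s)) ∈ N.1} := by
        rintro t ⟨htN, s, rfl⟩
        exact ⟨s, htN, rfl⟩
      exact (hfin.image _).subset hsub2

end Stmt17Final

/-- `(nwd(Q), ⊥*, seq(Q)) ≡_T (nwd(Q), ⊥*, Dense(Q))`. -/
theorem stmt17 : GTequiv DsysSeq DsysDense := by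
  exact st17_main
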